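/- Let J_m ⊆ GL_2(F) be the set of matrices (a b; c d) with a,d ∈ 1+p_F^m, b ∈ p_F^{-m}, c ∈ p_F^{3m}. Then every element of J_m factors uniquely as j = u·p with u ∈ J_m^u = J_m ∩ U (upper unitriangular with entry in p_F^{-m}) and p ∈ J_m ∩ B̄, where B̄ is the group of lower triangular invertible matrices; moreover J_m ∩ B̄ ⊆ K_m. -/
import Mathlib


open Matrix

/-- An abstract (normalized) discrete valuation on a field `F`, together with a choice of
uniformizer `ϖ`.  This models a non-archimedean local field. -/
structure DiscValuation (F : Type) [Field F] where
  v : F → ℤ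
  v_mul : ∀ x y : F, x ≠ 0 → y ≠ 0 → v (x * y) = v x + v y
  v_add : ∀ x y : F, x ≠ 0 → y ≠ 0 → x + y ≠ 0 → min (v x) (v y) ≤ v (x + y)
  ϖ : F
  ϖ_ne_zero : ϖ ≠ 0
  v_ϖ : v ϖ = 1

/-- Membership in the fractional ideal `𝔭_F^n = {x : v x ≥ n}` (in particular,
`mem 0` is the ring of integers `o_F`). -/
def DiscValuation.mem {F : Type} [Field F] (V : DiscValuation F) (n : ℤ) (x : F) : Prop :=
  x = 0 ∨ n ≤ V.v x

namespace DiscValuation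

variable {F : Type} [Field F] (V : DiscValuation F)

lemma v_one' : V.v 1 = 0 := by
  have h := V.v_mul 1 1 one_ne_zero one_ne_zero
  simp at h
  omega

lemma v_neg_one' : V.v (-1) = 0 := by
  have h := V.v_mul (-1) (-1) (by norm_num) (by norm_num)
  rw [neg_mul_neg, one_mul, V.v_one'] at h
  omega

lemma v_neg' {x : F} (hx : x ≠ 0) : V.v (-x) = V.v x := by
  have h := V.v_mul (-1) x (by norm_num) hx
  rw [neg_one_mul] at h
  rw [h, V.v_neg_one', zero_add]

lemma v_inv' {x : F} (hx : x ≠ 0) : V.v x⁻¹ = - V.v x := by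
  have h := V.v_mul x x⁻¹ hx (inv_ne_zero hx)
  rw [mul_inv_cancel₀ hx, V.v_one'] at h
  omega

lemma mem_zero' (n : ℤ) : V.mem n 0 := Or.inl rfl

lemma mem_mono' {n k : ℤ} (h : n ≤ k) {x : F} (hx : V.mem k x) : V.mem n x := by
  rcases hx with h0 | hv
  · exact Or.inl h0
  · exact Or.inr (le_trans h hv)

lemma mem_neg' {n : ℤ} {x : F} (hx : V.mem n x) : V.mem n (-x) := by
  rcases hx with h0 | hv
  · exact Or.inl (by simp [h0])
  · by_cases h0 : x = 0
    · exact Or.inl (by simp [h0])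
    · exact Or.inr (by rw [V.v_neg' h0]; exact hv)

lemma mem_add' {n : ℤ} {x y : F} (hx : V.mem n x) (hy : V.mem n y) :
    V.mem n (x + y) := by
  by_cases hx0 : x = 0
  · simpa [hx0] using hy
  by_cases hy0 : y = 0
  · simpa [hy0] using hx
  by_cases hxy : x + y = 0
  · exact Or.inl hxy
  rcases hx with h | hvx
  · exact absurd h hx0
  rcases hy with h | hvy
  · exact absurd h hy0
  have := V.v_add x y hx0 hy0 hxy
  exact Or.inr (le_trans (le_min hvx hvy) this)

lemma mem_sub' {n : ℤ} {x y : F} (hx : V.mem n x) (hy : V.mem n y) :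
    V.mem n (x - y) := by
  rw [sub_eq_add_neg]
  exact V.mem_add' hx (V.mem_neg' hy)

lemma mem_mul' {n k : ℤ} {x y : F} (hx : V.mem n x) (hy : V.mem k y) :
    V.mem (n + k) (x * y) := by
  by_cases hx0 : x = 0
  · exact Or.inl (by simp [hx0])
  by_cases hy0 : y = 0
  · exact Or.inl (by simp [hy0])
  rcases hx with h | hvx
  · exact absurd h hx0
  rcases hy with h | hvy
  · exact absurd h hy0
  exact Or.inr (by rw [V.v_mul x y hx0 hy0]; omega)

lemma mem_div_unit' {n : ℤ} {x d : F} (hd : d ≠ 0) (hv : V.v d = 0)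
    (hx : V.mem n x) : V.mem n (x / d) := by
  by_cases hx0 : x = 0
  · exact Or.inl (by simp [hx0])
  rcases hx with h | hvx
  · exact absurd h hx0
  refine Or.inr ?_
  rw [div_eq_mul_inv, V.v_mul x d⁻¹ hx0 (inv_ne_zero hd), V.v_inv' hd, hv]
  omega

/-- If `x - 1 ∈ 𝔭^m` with `m ≥ 1` then `x` is a unit of valuation zero. -/
lemma unit_of_mem' {m : ℤ} (hm : 1 ≤ m) {x : F} (h : V.mem m (x - 1)) :
    x ≠ 0 ∧ V.v x = 0 := by
  by_cases h1 : x = 1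
  · exact ⟨by rw [h1]; exact one_ne_zero, by rw [h1]; exact V.v_one'⟩
  have hs : x - 1 ≠ 0 := sub_ne_zero.mpr h1
  rcases h with h0 | hv
  · exact absurd h0 hs
  have hx0 : x ≠ 0 := by
    intro h0
    rw [h0, zero_sub] at hv
    rw [V.v_neg_one'] at hv
    omega
  constructor
  · exact hx0
  -- 0 ≤ v x : x = (x-1) + 1
  have h1' : x - 1 + 1 ≠ 0 := by simpa using hx0
  have hle1 := V.v_add (x - 1) 1 hs one_ne_zero h1'
  rw [sub_add_cancel, V.v_one'] at hle1
  -- v x ≤ 0 : 1 = x + -(x-1)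
  have h2' : x + -(x - 1) ≠ 0 := by
    rw [neg_sub, add_sub_cancel]; exact one_ne_zero
  have hle2 := V.v_add x (-(x - 1)) hx0 (neg_ne_zero.mpr hs) h2'
  rw [neg_sub, add_sub_cancel, V.v_one'] at hle2
  have hv1x : V.v (1 - x) = V.v (x - 1) := by
    rw [show (1 : F) - x = -(x - 1) by ring, V.v_neg' hs]
  rw [hv1x] at hle2
  simp only [le_min_iff, min_le_iff] at hle1 hle2
  omega

end DiscValuation

/-- every element of `J_m` factors uniquely as `j = u·p` with
`u = u(x)`, `x ∈ 𝔭^{-m}` (so `u ∈ J_m ∩ U`), and `p ∈ J_m ∩ B̄` lower triangular;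
moreover `J_m ∩ B̄ ⊆ K_m`. -/
theorem Jm_factorization (F : Type) [Field F] (V : DiscValuation F)
    (m : ℕ) (hm : 1 ≤ m)
    (J : Set (Matrix (Fin 2) (Fin 2) F))
    (hJ : J = {g : Matrix (Fin 2) (Fin 2) F |
      V.mem (m : ℤ) (g 0 0 - 1) ∧ V.mem (-(m : ℤ)) (g 0 1) ∧
      V.mem (3 * (m : ℤ)) (g 1 0) ∧ V.mem (m : ℤ) (g 1 1 - 1)}) :
    (∀ g ∈ J, ∃! up : F × Matrix (Fin 2) (Fin 2) F,
      V.mem (-(m : ℤ)) up.1 ∧ up.2 ∈ J ∧ up.2 0 1 = 0 ∧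
        g = !![1, up.1; 0, 1] * up.2) ∧
    (∀ p ∈ J, p 0 1 = 0 → ∀ i j, V.mem (m : ℤ) ((p - 1) i j)) := by
  have hm1 : (1 : ℤ) ≤ (m : ℤ) := by exact_mod_cast hm
  subst hJ
  constructor
  · rintro g ⟨ha, hb, hc, hd⟩
    obtain ⟨hd0, hdv⟩ := V.unit_of_mem' hm1 hd
    set x : F := g 0 1 / g 1 1 with hx'
    have hbc : V.mem ((m : ℤ)) (x * g 1 0) := by
      have hxc : x * g 1 0 = g 0 1 * g 1 0 / g 1 1 := by rw [hx']; ring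
      rw [hxc]
      have h1 : V.mem (-(m : ℤ) + 3 * (m : ℤ)) (g 0 1 * g 1 0) := V.mem_mul' hb hc
      exact V.mem_mono' (by omega) (V.mem_div_unit' hd0 hdv h1)
    refine ⟨(x, !![g 0 0 - x * g 1 0, 0; g 1 0, g 1 1]), ⟨?_, ⟨?_, ?_, ?_, ?_⟩, ?_, ?_⟩, ?_⟩
    · exact V.mem_div_unit' hd0 hdv hb
    · have h := V.mem_sub' ha hbc
      have e : g 0 0 - 1 - x * g 1 0 = g 0 0 - x * g 1 0 - 1 := by ring
      rw [e] at h
      simpa using h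
    · simpa using V.mem_zero' (-(m : ℤ))
    · simpa using hc
    · simpa using hd
    · simp
    · ext i j
      fin_cases i <;> fin_cases j
      · simp [Matrix.mul_apply, Fin.sum_univ_two]
      · simp [Matrix.mul_apply, Fin.sum_univ_two, hx', div_mul_cancel₀ _ hd0]
      · simp [Matrix.mul_apply, Fin.sum_univ_two]
      · simp [Matrix.mul_apply, Fin.sum_univ_two]
    · rintro ⟨y, q⟩ ⟨hy, hqJ, hq01, hgq⟩
      have e11 : g 1 1 = q 1 1 := by
        have := congrArg (fun M => M 1 1) hgq
        simpa [Matrix.mul_apply, Fin.sum_univ_two] using this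
      have e10 : g 1 0 = q 1 0 := by
        have := congrArg (fun M => M 1 0) hgq
        simpa [Matrix.mul_apply, Fin.sum_univ_two] using this
      have e01 : g 0 1 = y * q 1 1 := by
        have := congrArg (fun M => M 0 1) hgq
        simp only [Matrix.mul_apply, Fin.sum_univ_two] at this
        rw [show q 0 1 = 0 from hq01] at this
        simpa using this
      have e00 : g 0 0 = q 0 0 + y * q 1 0 := by
        have := congrArg (fun M => M 0 0) hgq
        simpa [Matrix.mul_apply, Fin.sum_univ_two] using this
      have hyx : y = x := by
        rw [hx', eq_div_iff hd0, e01, e11]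
      have hq : q = !![g 0 0 - x * g 1 0, 0; g 1 0, g 1 1] := by
        ext i j
        fin_cases i <;> fin_cases j
        · have : q 0 0 = g 0 0 - x * g 1 0 := by rw [e00, ← hyx, e10]; ring
          simpa using this
        · simpa using hq01
        · simpa using e10.symm
        · simpa using e11.symm
      simp only [Prod.mk.injEq]
      exact ⟨hyx, hq⟩
  · rintro p ⟨ha, hb, hc, hd⟩ h01 i j
    fin_cases i <;> fin_cases j
    · show V.mem (m : ℤ) ((p - 1) 0 0)
      have e : (p - 1) 0 0 = p 0 0 - 1 := by simp [Matrix.sub_apply, Matrix.one_apply]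
      rw [e]; exact ha
    · show V.mem (m : ℤ) ((p - 1) 0 1)
      have e : (p - 1) 0 1 = 0 := by simp [Matrix.sub_apply, Matrix.one_apply, h01]
      rw [e]; exact V.mem_zero' _
    · show V.mem (m : ℤ) ((p - 1) 1 0)
      have e : (p - 1) 1 0 = p 1 0 := by simp [Matrix.sub_apply, Matrix.one_apply]
      rw [e]; exact V.mem_mono' (by omega : (m : ℤ) ≤ 3 * (m : ℤ)) hc
    · show V.mem (m : ℤ) ((p - 1) 1 1)
      have e : (p - 1) 1 1 = p 1 1 - 1 := by simp [Matrix.sub_apply, Matrix.one_apply]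
      rw [e]; exact hd
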